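/- Under the MNL model with outside option at θ ∈ ℝ^d, for any nonempty S ⊆ [N] the Fisher information matrix satisfies I_θ(S) ⪰ p(0|S,θ) · Ā_θ(S) in the Loewner order, and consequently ā_θ(S) ā_θ(S)ᵀ ⪯ ((1 − p(0|S,θ))/p(0|S,θ)) · I_θ(S). -/

import Mathlib

open Matrix

noncomputable section

/-- MNL choice probability with outside option. -/
def mnlPOut {N d : ℕ} (a : Fin N → Fin d → ℝ) (θ : Fin d → ℝ) (S : Finset (Fin N)) (i : Fin N) :
    ℝ :=
  Real.exp (a i ⬝ᵥ θ) / (1 + ∑ j ∈ S, Real.exp (a j ⬝ᵥ θ))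

/-- Probability of the outside option. -/
def p0Out {N d : ℕ} (a : Fin N → Fin d → ℝ) (θ : Fin d → ℝ) (S : Finset (Fin N)) : ℝ :=
  1 / (1 + ∑ j ∈ S, Real.exp (a j ⬝ᵥ θ))

/-- Mean feature vector under the outside-option MNL choice probabilities. -/
def abarOut {N d : ℕ} (a : Fin N → Fin d → ℝ) (θ : Fin d → ℝ) (S : Finset (Fin N)) :
    Fin d → ℝ :=
  ∑ i ∈ S, mnlPOut a θ S i • a i

/-- Uncentered second-moment matrix under the outside-option MNL model. -/
def AbarOut {N d : ℕ} (a : Fin N → Fin d → ℝ) (θ : Fin d → ℝ) (S : Finset (Fin N)) :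
    Matrix (Fin d) (Fin d) ℝ :=
  ∑ i ∈ S, mnlPOut a θ S i • vecMulVec (a i) (a i)

/-- Fisher information matrix under the outside-option MNL model. -/
def fisherOut {N d : ℕ} (a : Fin N → Fin d → ℝ) (θ : Fin d → ℝ) (S : Finset (Fin N)) :
    Matrix (Fin d) (Fin d) ℝ :=
  AbarOut a θ S - vecMulVec (abarOut a θ S) (abarOut a θ S)

/- Auxiliary lemmas -/

lemma dotProduct_sum' {n α ι : Type*} [Fintype n] [NonUnitalNonAssocSemiring α]
    (s : Finset ι) (x : n → α) (f : ι → n → α) :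
    x ⬝ᵥ (∑ i ∈ s, f i) = ∑ i ∈ s, x ⬝ᵥ f i := by
  simp only [dotProduct, Finset.sum_apply, Finset.mul_sum]
  rw [Finset.sum_comm]

lemma sum_mulVec' {m n α ι : Type*} [Fintype n] [NonUnitalNonAssocSemiring α]
    (s : Finset ι) (M : ι → Matrix m n α) (x : n → α) :
    (∑ i ∈ s, M i) *ᵥ x = ∑ i ∈ s, M i *ᵥ x := by
  ext j
  simp only [mulVec, dotProduct, Matrix.sum_apply, Finset.sum_apply, Finset.sum_mul]
  rw [Finset.sum_comm]

lemma quad_vmv {d : ℕ} (v x : Fin d → ℝ) : x ⬝ᵥ (vecMulVec v v *ᵥ x) = (v ⬝ᵥ x) ^ 2 := by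
  simp only [dotProduct, mulVec, vecMulVec_apply, sq, Finset.sum_mul, Finset.mul_sum]
  rw [Finset.sum_comm]
  refine Finset.sum_congr rfl fun i _ => Finset.sum_congr rfl fun k _ => by ring

lemma quad_sum {d N : ℕ} (S : Finset (Fin N)) (c : Fin N → ℝ) (v : Fin N → Fin d → ℝ)
    (x : Fin d → ℝ) :
    x ⬝ᵥ ((∑ i ∈ S, c i • vecMulVec (v i) (v i)) *ᵥ x) = ∑ i ∈ S, c i * (v i ⬝ᵥ x) ^ 2 := by
  rw [sum_mulVec', dotProduct_sum']
  refine Finset.sum_congr rfl fun i _ => ?_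
  rw [smul_mulVec, dotProduct_smul, quad_vmv]
  simp

lemma herm_vmv {d : ℕ} (v : Fin d → ℝ) : (vecMulVec v v).IsHermitian := by
  ext i j; simp [vecMulVec_apply, mul_comm]

lemma herm_smul {d : ℕ} (c : ℝ) {M : Matrix (Fin d) (Fin d) ℝ} (hM : M.IsHermitian) :
    (c • M).IsHermitian := by
  unfold Matrix.IsHermitian at *
  rw [conjTranspose_smul, hM]
  simp

lemma herm_Abar {N d : ℕ} (a : Fin N → Fin d → ℝ) (θ : Fin d → ℝ) (S : Finset (Fin N)) :
    (AbarOut a θ S).IsHermitian := by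
  ext i j
  simp [AbarOut, Matrix.sum_apply, vecMulVec_apply, mul_comm]

theorem fisher_out_lower_bound {N d : ℕ} (a : Fin N → Fin d → ℝ) (θ : Fin d → ℝ)
    (S : Finset (Fin N)) (hS : S.Nonempty) :
    (fisherOut a θ S - p0Out a θ S • AbarOut a θ S).PosSemidef ∧
    (((1 - p0Out a θ S) / p0Out a θ S) • fisherOut a θ S -
      vecMulVec (abarOut a θ S) (abarOut a θ S)).PosSemidef := by
  set p := mnlPOut a θ S with hp
  set p0 := p0Out a θ S with hp0
  set D := 1 + ∑ j ∈ S, Real.exp (a j ⬝ᵥ θ) with hD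
  have hsum_pos : 0 < ∑ j ∈ S, Real.exp (a j ⬝ᵥ θ) :=
    Finset.sum_pos (fun j _ => Real.exp_pos _) hS
  have hDpos : 0 < D := by positivity
  have hp0pos : 0 < p0 := by rw [hp0, p0Out]; positivity
  have hp0lt : p0 < 1 := by
    rw [hp0, p0Out]
    rw [div_lt_one hDpos]
    linarith
  have hpnn : ∀ i, 0 ≤ p i := fun i => by
    rw [hp, mnlPOut]; positivity
  have hpsum : ∑ i ∈ S, p i = 1 - p0 := by
    rw [hp, hp0, p0Out]
    simp only [mnlPOut]
    rw [← Finset.sum_div]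
    field_simp
    ring
  -- key Cauchy-Schwarz inequality
  have key : ∀ x : Fin d → ℝ,
      (∑ i ∈ S, p i * (a i ⬝ᵥ x)) ^ 2 ≤ (1 - p0) * ∑ i ∈ S, p i * (a i ⬝ᵥ x) ^ 2 := by
    intro x
    have := Finset.sum_mul_sq_le_sq_mul_sq S (fun i => Real.sqrt (p i))
      (fun i => Real.sqrt (p i) * (a i ⬝ᵥ x))
    have h1 : ∀ i ∈ S, Real.sqrt (p i) * (Real.sqrt (p i) * (a i ⬝ᵥ x)) = p i * (a i ⬝ᵥ x) := by
      intro i _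
      rw [← mul_assoc, Real.mul_self_sqrt (hpnn i)]
    have h2 : ∀ i ∈ S, Real.sqrt (p i) ^ 2 = p i := fun i _ => Real.sq_sqrt (hpnn i)
    have h3 : ∀ i ∈ S, (Real.sqrt (p i) * (a i ⬝ᵥ x)) ^ 2 = p i * (a i ⬝ᵥ x) ^ 2 := by
      intro i _
      rw [mul_pow, Real.sq_sqrt (hpnn i)]
    rw [Finset.sum_congr rfl h1, Finset.sum_congr rfl h2, Finset.sum_congr rfl h3, hpsum] at this
    exact this
  -- quadratic forms
  have habar : ∀ x : Fin d → ℝ, abarOut a θ S ⬝ᵥ x = ∑ i ∈ S, p i * (a i ⬝ᵥ x) := by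
    intro x
    rw [abarOut]
    rw [show (∑ i ∈ S, p i • a i) ⬝ᵥ x = ∑ i ∈ S, (p i • a i) ⬝ᵥ x by
      simp only [dotProduct, Finset.sum_apply, Finset.sum_mul]; rw [Finset.sum_comm]]
    refine Finset.sum_congr rfl fun i _ => ?_
    simp [dotProduct, Finset.mul_sum, mul_assoc]
  have hqA : ∀ x : Fin d → ℝ,
      x ⬝ᵥ (AbarOut a θ S *ᵥ x) = ∑ i ∈ S, p i * (a i ⬝ᵥ x) ^ 2 := fun x => quad_sum S p a x
  have hqa : ∀ x : Fin d → ℝ,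
      x ⬝ᵥ (vecMulVec (abarOut a θ S) (abarOut a θ S) *ᵥ x)
        = (∑ i ∈ S, p i * (a i ⬝ᵥ x)) ^ 2 := by
    intro x
    rw [quad_vmv, habar]
  constructor
  · refine Matrix.PosSemidef.of_dotProduct_mulVec_nonneg ?_ ?_
    · exact ((herm_Abar a θ S).sub (herm_vmv _)).sub (herm_smul _ (herm_Abar a θ S))
    · intro x
      have hx : star x = x := rfl
      rw [hx, sub_mulVec, fisherOut, sub_mulVec, smul_mulVec,
        dotProduct_sub, dotProduct_sub, dotProduct_smul, hqA, hqa]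
      have := key x
      have h := hqA x
      simp only [smul_eq_mul]
      nlinarith [key x]
  · refine Matrix.PosSemidef.of_dotProduct_mulVec_nonneg ?_ ?_
    · exact (herm_smul _ ((herm_Abar a θ S).sub (herm_vmv _))).sub (herm_vmv _)
    · intro x
      have hx : star x = x := rfl
      rw [hx, sub_mulVec, fisherOut, smul_mulVec, sub_mulVec,
        dotProduct_sub, dotProduct_smul, dotProduct_sub, hqA, hqa]
      simp only [smul_eq_mul]
      set Q := ∑ i ∈ S, p i * (a i ⬝ᵥ x) ^ 2 with hQ
      set s := ∑ i ∈ S, p i * (a i ⬝ᵥ x) with hs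
      have hkey : s ^ 2 ≤ (1 - p0) * Q := key x
      rw [sub_nonneg, div_mul_eq_mul_div, le_div_iff₀ hp0pos]
      nlinarith

end
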